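/- If 0 < a < b, then τ*(a,b) = √((b−a)/(a·b)) is a critical point of the expected loss L(τ) = (V/2)(1−(a/2)τ²)(1−(b/2)τ²) + V(a/2)τ², i.e., L'(τ*) = 0, and the second derivative satisfies L''(τ*) > 0 for any V > 0. -/

import Mathlib

theorem stmt_1 (a b V : ℝ) (ha : 0 < a) (hab : a < b) (hV : 0 < V)
    (L : ℝ → ℝ)
    (hL : L = fun τ => (V / 2) * ((1 - (a / 2) * τ^2) * (1 - (b / 2) * τ^2)) +
      V * (a / 2) * τ^2) :
    deriv L (Real.sqrt ((b - a) / (a * b))) = 0 ∧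
    0 < deriv (deriv L) (Real.sqrt ((b - a) / (a * b))) := by
  have hd : ∀ τ : ℝ, HasDerivAt L (V * ((a - b) / 2) * τ + V * (a * b / 2) * τ ^ 3) τ := by
    intro τ
    rw [hL]
    have h1 := hasDerivAt_pow 2 τ
    have := ((((h1.const_mul (a/2)).const_sub 1).mul
      ((h1.const_mul (b/2)).const_sub 1)).const_mul (V/2)).add
      ((h1.const_mul (V * (a/2))))
    refine this.congr_deriv ?_
    push_cast; ring
  have hL' : deriv L = fun τ => V * ((a - b) / 2) * τ + V * (a * b / 2) * τ ^ 3 := by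
    funext τ; exact (hd τ).deriv
  have hd2 : ∀ τ : ℝ, HasDerivAt (deriv L) (V * ((a - b) / 2) + V * (a * b / 2) * (3 * τ ^ 2)) τ := by
    intro τ
    rw [hL']
    have h1 := hasDerivAt_pow 3 τ
    have := ((hasDerivAt_id' (𝕜 := ℝ) (x := τ)).const_mul (V * ((a - b) / 2))).add
      (h1.const_mul (V * (a * b / 2)))
    refine this.congr_deriv ?_
    push_cast; ring
  have hb : 0 < b := ha.trans hab
  have hba : 0 < b - a := sub_pos.mpr hab
  set s := Real.sqrt ((b - a) / (a * b)) with hs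
  have hx : (0:ℝ) ≤ (b - a) / (a * b) := by positivity
  have hsq : s ^ 2 = (b - a) / (a * b) := Real.sq_sqrt hx
  have hab0 : a * b ≠ 0 := by positivity
  constructor
  · rw [(hd s).deriv]
    have : V * (a * b / 2) * s ^ 3 = V * (a * b / 2) * ((b - a) / (a * b)) * s := by
      rw [← hsq]; ring
    rw [this]
    field_simp
    ring
  · rw [(hd2 s).deriv, hsq]
    have : V * ((a - b) / 2) + V * (a * b / 2) * (3 * ((b - a) / (a * b))) = V * (b - a) := by
      field_simp; ring
    rw [this]
    have := sub_pos.mpr hab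
    positivity
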